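/- Let k ≥ 1 and let α be a ℚ-valued function on the set of partitions of k. Suppose that α((k)) = 0 (the value on the one-row partition is zero) and that for every 1 ≤ l ≤ k and every partition μ of k − l, ∑_{σ} α(σ) = 0, where the sum is over all partitions σ of k containing μ such that σ/μ is a vertical strip (σ_i − μ_i ≤ 1 for all i). Then α is identically zero. -/
import Mathlib

/-- `IsPartitionOf k σ`: `σ` is a partition of `k`, written as an antitone,
eventually-zero sequence of parts summing to `k`. -/
def IsPartitionOf (k : ℕ) (σ : ℕ → ℕ) : Prop :=
  Antitone σ ∧ (∃ N, ∀ i ≥ N, σ i = 0) ∧ ∑ᶠ i, σ i = k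

private lemma finsum_eq_range {σ : ℕ → ℕ} {m : ℕ} (h : ∀ i, m ≤ i → σ i = 0) :
    ∑ᶠ i, σ i = ∑ i ∈ Finset.range m, σ i := by
  apply finsum_eq_sum_of_support_subset
  intro i hi
  simp only [Function.mem_support] at hi
  simp only [Finset.coe_range, Set.mem_Iio]
  by_contra h'
  exact hi (h i (le_of_not_gt h'))

/-- facts about a partition of `k ≥ 1`, with `m` = number of parts. -/
private lemma part_facts {k : ℕ} {σ : ℕ → ℕ} (h : IsPartitionOf k σ) (hk : 1 ≤ k) :
    (∀ i, sInf {n | σ n = 0} ≤ i → σ i = 0) ∧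
    (∀ i, i < sInf {n | σ n = 0} → 1 ≤ σ i) ∧
    (∑ i ∈ Finset.range (sInf {n | σ n = 0}) , σ i = k) ∧
    1 ≤ sInf {n | σ n = 0} ∧ sInf {n | σ n = 0} ≤ k := by
  obtain ⟨hanti, ⟨N, hN⟩, hsum⟩ := h
  set m := sInf {n | σ n = 0} with hm
  have hne : {n | σ n = 0}.Nonempty := ⟨N, hN N le_rfl⟩
  have hzm : σ m = 0 := Nat.sInf_mem hne
  have hz : ∀ i, m ≤ i → σ i = 0 := fun i hi =>
    Nat.le_zero.mp (hzm ▸ hanti hi)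
  have hpos : ∀ i, i < m → 1 ≤ σ i := fun i hi =>
    Nat.one_le_iff_ne_zero.mpr (Nat.notMem_of_lt_sInf (s := {n | σ n = 0}) hi)
  have hsum' : ∑ i ∈ Finset.range m, σ i = k := by
    rw [← finsum_eq_range hz, hsum]
  refine ⟨hz, hpos, hsum', ?_, ?_⟩
  · by_contra h'
    have : m = 0 := by omega
    have : σ 0 = 0 := hz 0 (by omega)
    have : ∑ i ∈ Finset.range m, σ i = 0 := by
      apply Finset.sum_eq_zero; intro i hi; exact hz i (by omega)
    omega
  · have : ∑ i ∈ Finset.range m, 1 ≤ ∑ i ∈ Finset.range m, σ i :=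
      Finset.sum_le_sum fun i hi => hpos i (Finset.mem_range.mp hi)
    simpa [hsum'] using this

private lemma parts_finite (k : ℕ) (hk : 1 ≤ k) :
    {σ : ℕ → ℕ | IsPartitionOf k σ}.Finite := by
  have hbound : ∀ σ ∈ {σ : ℕ → ℕ | IsPartitionOf k σ},
      (∀ i, σ i ≤ k) ∧ (∀ i, k ≤ i → σ i = 0) := by
    intro σ hσ
    obtain ⟨hz, hpos, hsum, hm1, hmk⟩ := part_facts hσ hk
    constructor
    · intro i
      have h0 : σ i ≤ σ 0 := hσ.1 (Nat.zero_le i)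
      have : σ 0 ≤ ∑ j ∈ Finset.range (sInf {n | σ n = 0}), σ j :=
        Finset.single_le_sum (fun j _ => Nat.zero_le _)
          (Finset.mem_range.mpr hm1)
      omega
    · intro i hi
      exact hz i (le_trans hmk hi)
  apply Set.Finite.of_finite_image (f := fun σ (i : Fin k) => σ i)
  · apply Set.Finite.subset
      (Set.Finite.pi (fun _ : Fin k => Set.finite_Iic k))
    rintro g ⟨σ, hσ, rfl⟩
    intro i _
    exact (hbound σ hσ).1 i
  · intro σ hσ τ hτ heq
    funext i
    by_cases hik : i < k
    · exact congrFun heq ⟨i, hik⟩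
    · rw [(hbound σ hσ).2 i (by omega), (hbound τ hτ).2 i (by omega)]

theorem stmt_15 (k : ℕ) (hk : 1 ≤ k) (α : (ℕ → ℕ) → ℚ)
    (hrow : α (fun i => if i = 0 then k else 0) = 0)
    (hsys : ∀ l : ℕ, 1 ≤ l → l ≤ k → ∀ μ : ℕ → ℕ, IsPartitionOf (k - l) μ →
      (∑ᶠ σ ∈ { σ : ℕ → ℕ | IsPartitionOf k σ ∧ ∀ i, μ i ≤ σ i ∧ σ i ≤ μ i + 1 },
        α σ) = 0) :
    ∀ σ : ℕ → ℕ, IsPartitionOf k σ → α σ = 0 := by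
  classical
  have hPfin := parts_finite k hk
  suffices H : ∀ d σ, IsPartitionOf k σ → k - sInf {n | σ n = 0} ≤ d → α σ = 0 by
    intro σ hσ
    exact H k σ hσ (Nat.sub_le _ _)
  intro d
  induction d using Nat.strong_induction_on with
  | _ d IH =>
    intro σ hσ hd
    obtain ⟨hz, hpos, hsum, hm1, hmk⟩ := part_facts hσ hk
    set m := sInf {n | σ n = 0} with hmdef
    -- μ = σ - 1 columnwise
    have hμ : IsPartitionOf (k - m) (fun i => σ i - 1) := by
      refine ⟨fun i j hij => Nat.sub_le_sub_right (hσ.1 hij) 1,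
        ⟨m, fun i hi => by show σ i - 1 = 0; rw [hz i hi]⟩, ?_⟩
      rw [finsum_eq_range (σ := fun i => σ i - 1) (m := m)
        (fun i hi => by show σ i - 1 = 0; rw [hz i hi])]
      have : ∑ i ∈ Finset.range m, (σ i - 1) =
          ∑ i ∈ Finset.range m, σ i - ∑ i ∈ Finset.range m, 1 := by
        rw [eq_tsub_iff_add_eq_of_le
          (Finset.sum_le_sum fun i hi => hpos i (Finset.mem_range.mp hi)),
          ← Finset.sum_add_distrib]
        apply Finset.sum_congr rfl
        intro i hi
        have := hpos i (Finset.mem_range.mp hi)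
        omega
      rw [this, hsum]
      simp
    have key := hsys m hm1 hmk _ hμ
    set S := {τ : ℕ → ℕ | IsPartitionOf k τ ∧
      ∀ i, (fun i => σ i - 1) i ≤ τ i ∧ τ i ≤ (fun i => σ i - 1) i + 1} with hSdef
    have hSfin : S.Finite := hPfin.subset fun τ hτ => hτ.1
    rw [finsum_mem_eq_finite_toFinset_sum _ hSfin] at key
    have hσS : σ ∈ hSfin.toFinset := by
      rw [Set.Finite.mem_toFinset]
      refine ⟨hσ, fun i => ⟨Nat.sub_le _ _, ?_⟩⟩
      show σ i ≤ σ i - 1 + 1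
      omega
    rw [← Finset.add_sum_erase _ _ hσS] at key
    have hrest : ∀ τ ∈ hSfin.toFinset.erase σ, α τ = 0 := by
      intro τ hτ
      obtain ⟨hτne, hτS⟩ := Finset.mem_erase.mp hτ
      rw [Set.Finite.mem_toFinset] at hτS
      obtain ⟨hτpart, hτbd⟩ := hτS
      obtain ⟨hzτ, hposτ, hsumτ, hm1τ, hmkτ⟩ := part_facts hτpart hk
      set m' := sInf {n | τ n = 0} with hm'def
      -- if τ m = 0 then τ = σ
      have hτm : τ m ≠ 0 := by
        intro h0
        apply hτne
        have hle : ∀ i ∈ Finset.range m, τ i ≤ σ i := by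
          intro i hi
          have h1 : τ i ≤ σ i - 1 + 1 := (hτbd i).2
          have h2 := hpos i (Finset.mem_range.mp hi)
          omega
        have hzτ' : ∀ i, m ≤ i → τ i = 0 := fun i hi =>
          Nat.le_zero.mp (h0 ▸ hτpart.1 hi)
        have hsumτ' : ∑ i ∈ Finset.range m, τ i = k := by
          rw [← finsum_eq_range hzτ', hτpart.2.2]
        have heq : ∀ i ∈ Finset.range m, τ i = σ i :=
          (Finset.sum_eq_sum_iff_of_le hle).mp (by rw [hsumτ', hsum])
        funext i
        by_cases hi : i < m
        · exact heq i (Finset.mem_range.mpr hi)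
        · rw [hzτ' i (by omega), hz i (by omega)]
      -- so m < m'
      have hmm' : m < m' := by
        by_contra h'
        exact hτm (hzτ m (by omega))
      exact IH (k - m') (by omega) τ hτpart le_rfl
    rw [Finset.sum_eq_zero hrest, add_zero] at key
    exact key
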